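/- A point z = [1:z₂:z₃:z₄:z₅:z₆] with ᵗzQz = 0 and ᵗzQz̄ > 0 (Q the Gram matrix of U ⊕ U(2) ⊕ A₂(2)) satisfies ᵗzQz̄ > 0 if and only if the matrix τ = Ψ(z) = [[z₃, z₅+ωz₆],[z₅+ω²z₆, z₄]] satisfies (τ - τ*)/(2i) being positive or negative definite; the component with Im z₃ > 0 corresponds exactly to τ lying in the Hermitian upper half space ℍ₂ = {τ ∈ GL₂(ℂ) : (τ - τ*)/(2i) > 0}. -/

import Mathlib

open Complex Matrix

/-- A primitive cube root of unity. -/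
noncomputable def ω : ℂ := Complex.exp (2 * Real.pi * Complex.I / 3)

/-- The Gram matrix of `U ⊕ U(2) ⊕ A₂(2)`, over `ℂ`. -/
def Qc : Matrix (Fin 6) (Fin 6) ℂ :=
  !![0,1,0,0,0,0; 1,0,0,0,0,0; 0,0,0,2,0,0; 0,0,2,0,0,0; 0,0,0,0,-4,2; 0,0,0,0,2,-4]

/-- The map `Ψ` sending `z = (1, z₂, …, z₆)` (zero-indexed) to a 2×2 matrix. -/
noncomputable def Psi (z : Fin 6 → ℂ) : Matrix (Fin 2) (Fin 2) ℂ :=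
  !![z 2, z 4 + ω * z 5; z 4 + ω ^ 2 * z 5, z 3]

open scoped ComplexOrder

/-- The "imaginary part" `(τ - τ*) / (2i)` of `τ = Ψ(z)`. -/
noncomputable def ImPart (z : Fin 6 → ℂ) : Matrix (Fin 2) (Fin 2) ℂ :=
  (2 * Complex.I)⁻¹ • (Psi z - (Psi z)ᴴ)

/- ## Auxiliary lemmas -/

lemma aux_omega_cube : ω ^ 3 = 1 := by
  rw [ω, ← Complex.exp_nat_mul]
  rw [show (3:ℕ) * (2 * Real.pi * Complex.I / 3) = 2 * Real.pi * Complex.I by ring]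
  exact Complex.exp_two_pi_mul_I

lemma aux_omega_im : ω.im = Real.sin (2 * Real.pi / 3) := by
  rw [ω, show (2 * (Real.pi:ℂ) * Complex.I / 3) = ((2 * Real.pi / 3 : ℝ):ℂ) * Complex.I by
    push_cast; ring]
  exact Complex.exp_ofReal_mul_I_im _

lemma aux_omega_ne_one : ω ≠ 1 := by
  intro h
  have h2 : ω.im = 0 := by rw [h]; simp
  rw [aux_omega_im] at h2
  have : 0 < Real.sin (2 * Real.pi / 3) := by
    apply Real.sin_pos_of_pos_of_lt_pi <;> nlinarith [Real.pi_pos]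
  linarith

lemma aux_omega_sum : ω ^ 2 + ω + 1 = 0 := by
  have h : (ω - 1) * (ω ^ 2 + ω + 1) = 0 := by linear_combination aux_omega_cube
  rcases mul_eq_zero.mp h with h1 | h2
  · exact absurd (by linear_combination h1) aux_omega_ne_one
  · exact h2

lemma aux_omega_ne_zero : ω ≠ 0 := Complex.exp_ne_zero _

lemma aux_omega_conj : (starRingEnd ℂ) ω = ω ^ 2 := by
  have hc : (starRingEnd ℂ) (2 * (Real.pi:ℂ) * Complex.I / 3)
      = -(2 * Real.pi * Complex.I / 3) := by
    simp [map_div₀, Complex.conj_I, map_ofNat]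
    ring
  have h1 : (starRingEnd ℂ) ω = Complex.exp (-(2 * Real.pi * Complex.I / 3)) := by
    rw [ω, ← Complex.exp_conj, hc]
  have h3 : Complex.exp (-(2 * Real.pi * Complex.I / 3)) * ω = 1 := by
    rw [ω, ← Complex.exp_add]; simp
  have h4 : ω ^ 2 * ω = 1 := by linear_combination aux_omega_cube
  rw [h1]
  exact mul_right_cancel₀ aux_omega_ne_zero (h3.trans h4.symm)

lemma aux_omega_re : ω.re = -(1/2) := by
  have h := congrArg Complex.re aux_omega_sum
  rw [← aux_omega_conj] at h
  simp [Complex.add_re, Complex.conj_re] at h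
  linarith

lemma aux_omega_normSq : ω.re ^ 2 + ω.im ^ 2 = 1 := by
  have h : ω * (starRingEnd ℂ) ω = 1 := by
    rw [aux_omega_conj]; linear_combination aux_omega_cube
  have h2 := congrArg Complex.re h
  simp [Complex.mul_re, Complex.conj_re, Complex.conj_im] at h2
  nlinarith [h2]

lemma aux_omega_im_sq : ω.im ^ 2 = 3/4 := by
  have := aux_omega_normSq
  rw [aux_omega_re] at this
  nlinarith

lemma aux_sub_conj (z : ℂ) : z - (starRingEnd ℂ) z = 2 * (z.im : ℂ) * Complex.I := by
  rw [Complex.sub_conj]; push_cast; ring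

lemma aux_cons_val_five {α : Type*} (a : α) (u : Fin 5 → α) : Matrix.vecCons a u 5 = u 4 := rfl

lemma aux_qform (v w : Fin 6 → ℂ) : v ⬝ᵥ Qc.mulVec w =
    v 0 * w 1 + v 1 * w 0 + 2*(v 2*w 3) + 2*(v 3*w 2)
      - 4*(v 4*w 4) + 2*(v 4*w 5) + 2*(v 5*w 4) - 4*(v 5*w 5) := by
  simp [dotProduct, Matrix.mulVec, Fin.sum_univ_six, Qc, aux_cons_val_five,
    Matrix.vecHead, Matrix.vecTail]
  ring

lemma aux_posdef_two (a d : ℝ) (b : ℂ) (ha : 0 < a) (hdet : Complex.normSq b < a * d) :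
    (!![(a:ℂ), b; (starRingEnd ℂ) b, (d:ℂ)]).PosDef := by
  rw [Matrix.posDef_iff_dotProduct_mulVec]
  constructor
  · ext i j
    fin_cases i <;> fin_cases j <;>
      simp [Matrix.conjTranspose_apply, Complex.conj_ofReal]
  · intro x hx
    have key : ∀ w : ℂ, 0 < w.re → w.im = 0 → 0 < w := by
      intro w h1 h2; rw [Complex.lt_def]; simp [h1, h2]
    simp only [Matrix.mulVec, dotProduct, Fin.sum_univ_two, Pi.star_apply, RCLike.star_def,
      show (!![(a:ℂ), b; (starRingEnd ℂ) b, (d:ℂ)] 0 0) = (a:ℂ) from rfl,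
      show (!![(a:ℂ), b; (starRingEnd ℂ) b, (d:ℂ)] 0 1) = b from rfl,
      show (!![(a:ℂ), b; (starRingEnd ℂ) b, (d:ℂ)] 1 0) = (starRingEnd ℂ) b from rfl,
      show (!![(a:ℂ), b; (starRingEnd ℂ) b, (d:ℂ)] 1 1) = (d:ℂ) from rfl]
    apply key
    · simp only [Complex.add_re, Complex.mul_re, Complex.conj_re, Complex.conj_im,
        Complex.ofReal_re, Complex.ofReal_im, Complex.mul_im, Complex.add_im]
      have hb : Complex.normSq b = b.re ^ 2 + b.im ^ 2 := by
        rw [Complex.normSq_apply]; ring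
      rw [hb] at hdet
      by_cases h1 : x 1 = 0
      · have h0 : x 0 ≠ 0 := by
          intro h0; apply hx; funext i; fin_cases i <;> simp [h0, h1]
        have hn : 0 < (x 0).re ^ 2 + (x 0).im ^ 2 := by
          have : (x 0).re ≠ 0 ∨ (x 0).im ≠ 0 := by
            by_contra hc; push_neg at hc; exact h0 (by simp [Complex.ext_iff, hc.1, hc.2])
          rcases this with h | h <;>
            nlinarith [sq_nonneg (x 0).re, sq_nonneg (x 0).im, mul_self_pos.mpr h]
        simp [h1]
        nlinarith
      · have hn : 0 < (x 1).re ^ 2 + (x 1).im ^ 2 := by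
          have : (x 1).re ≠ 0 ∨ (x 1).im ≠ 0 := by
            by_contra hc; push_neg at hc; exact h1 (by simp [Complex.ext_iff, hc.1, hc.2])
          rcases this with h | h <;>
            nlinarith [sq_nonneg (x 1).re, sq_nonneg (x 1).im, mul_self_pos.mpr h]
        nlinarith [sq_nonneg (a * (x 0).re + b.re * (x 1).re - b.im * (x 1).im),
          sq_nonneg (a * (x 0).im + b.re * (x 1).im + b.im * (x 1).re),
          mul_pos (sub_pos.mpr hdet) hn, sq_nonneg ((x 0).re), sq_nonneg ((x 0).im)]
    · simp only [Complex.add_im, Complex.mul_im, Complex.conj_re, Complex.conj_im,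
        Complex.add_re, Complex.mul_re, Complex.ofReal_re, Complex.ofReal_im]
      ring

lemma aux_posdef_entry (a d : ℝ) (b : ℂ)
    (h : (!![(a:ℂ), b; (starRingEnd ℂ) b, (d:ℂ)]).PosDef) : 0 < a := by
  have hne : (![1, 0] : Fin 2 → ℂ) ≠ 0 := by
    intro hc
    have := congrFun hc 0
    simp at this
  have h2 := h.dotProduct_mulVec_pos hne
  simp only [Matrix.mulVec, dotProduct, Fin.sum_univ_two, Pi.star_apply, RCLike.star_def,
    Matrix.cons_val_zero, Matrix.cons_val_one, Matrix.head_cons,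
    show (!![(a:ℂ), b; (starRingEnd ℂ) b, (d:ℂ)] 0 0) = (a:ℂ) from rfl,
    show (!![(a:ℂ), b; (starRingEnd ℂ) b, (d:ℂ)] 0 1) = b from rfl,
    show (!![(a:ℂ), b; (starRingEnd ℂ) b, (d:ℂ)] 1 0) = (starRingEnd ℂ) b from rfl,
    show (!![(a:ℂ), b; (starRingEnd ℂ) b, (d:ℂ)] 1 1) = (d:ℂ) from rfl] at h2
  simp at h2
  exact Complex.zero_lt_real.mp (by simpa using h2)

/-- For a point of the period domain, `(Ψ(z) - Ψ(z)*)/(2i)` is positive or negative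
definite, and it is positive definite (i.e. `Ψ(z)` lies in the Hermitian upper half
space `ℍ₂`) exactly on the component where `Im z₃ > 0`. -/
theorem stmt11 (z : Fin 6 → ℂ) (h0 : z 0 = 1)
    (hq : z ⬝ᵥ Qc.mulVec z = 0)
    (hpos : 0 < (z ⬝ᵥ Qc.mulVec fun i => (starRingEnd ℂ) (z i)).re) :
    ((ImPart z).PosDef ∨ (-(ImPart z)).PosDef) ∧
      (0 < (z 2).im ↔ (ImPart z).PosDef) := by
  set a := (z 2).im with ha_def
  set d := (z 3).im with hd_def
  set y4 := (z 4).im with hy4_def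
  set y5 := (z 5).im with hy5_def
  -- Step 1: the determinant inequality
  have hD : y4 ^ 2 - y4 * y5 + y5 ^ 2 < a * d := by
    rw [aux_qform] at hq hpos
    have hqre := congrArg Complex.re hq
    simp only [h0, Complex.add_re, Complex.sub_re, Complex.mul_re, Complex.mul_im,
      Complex.add_im, Complex.sub_im, Complex.one_re, Complex.one_im, Complex.zero_re,
      Complex.conj_re, Complex.conj_im, Complex.re_ofNat, Complex.im_ofNat] at hqre hpos
    ring_nf at hqre hpos ⊢
    linarith
  -- Step 2: explicit form of ImPart
  set bb : ℂ := (y4 : ℂ) + ω * (y5 : ℂ) with hbb_def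
  have h2I : (2 * Complex.I)⁻¹ = -Complex.I / 2 := by
    rw [mul_inv, Complex.inv_I]; ring
  have hP00 : Psi z 0 0 = z 2 := rfl
  have hP01 : Psi z 0 1 = z 4 + ω * z 5 := rfl
  have hP10 : Psi z 1 0 = z 4 + ω ^ 2 * z 5 := rfl
  have hP11 : Psi z 1 1 = z 3 := rfl
  have simpset : ∀ i j : Fin 2, ImPart z i j
      = -Complex.I / 2 * (Psi z i j - (starRingEnd ℂ) (Psi z j i)) := by
    intro i j
    simp only [ImPart, Matrix.smul_apply, Matrix.sub_apply, Matrix.conjTranspose_apply,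
      smul_eq_mul, h2I, RCLike.star_def]
  have e00 : ImPart z 0 0 = (a:ℂ) := by
    rw [simpset, hP00]
    linear_combination (-Complex.I/2) * aux_sub_conj (z 2) - (a:ℂ) * Complex.I_sq
  have e11 : ImPart z 1 1 = (d:ℂ) := by
    rw [simpset, hP11]
    linear_combination (-Complex.I/2) * aux_sub_conj (z 3) - (d:ℂ) * Complex.I_sq
  have e01 : ImPart z 0 1 = bb := by
    rw [simpset, hP01, hP10, hbb_def]
    simp only [map_add, _root_.map_mul, map_pow, aux_omega_conj]
    linear_combination (-Complex.I/2) * aux_sub_conj (z 4)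
      + (-Complex.I/2) * ω * aux_sub_conj (z 5)
      + (Complex.I/2) * ω * (starRingEnd ℂ) (z 5) * aux_omega_cube
      - (((z 4).im:ℂ) + ω * ((z 5).im:ℂ)) * Complex.I_sq
  have e10 : ImPart z 1 0 = (starRingEnd ℂ) bb := by
    rw [simpset, hP10, hP01, hbb_def]
    simp only [map_add, _root_.map_mul, map_pow, aux_omega_conj, Complex.conj_ofReal]
    linear_combination (-Complex.I/2) * aux_sub_conj (z 4)
      + (-Complex.I/2) * ω^2 * aux_sub_conj (z 5)
      - (((z 4).im:ℂ) + ω^2 * ((z 5).im:ℂ)) * Complex.I_sq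
  have hIm : ImPart z = !![(a:ℂ), bb; (starRingEnd ℂ) bb, (d:ℂ)] := by
    ext i j
    fin_cases i <;> fin_cases j
    · exact e00
    · exact e01
    · exact e10
    · exact e11
  -- Step 3: norm of bb
  have hnb : Complex.normSq bb = y4 ^ 2 - y4 * y5 + y5 ^ 2 := by
    have h1 : bb.re = y4 + ω.re * y5 := by
      simp [hbb_def, Complex.add_re, Complex.mul_re]
    have h2 : bb.im = ω.im * y5 := by
      simp [hbb_def, Complex.add_im, Complex.mul_im]
    rw [Complex.normSq_apply, h1, h2, aux_omega_re]
    nlinarith [aux_omega_im_sq]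
  have hdet : Complex.normSq bb < a * d := by rw [hnb]; exact hD
  have hDnn : (0:ℝ) ≤ y4 ^ 2 - y4 * y5 + y5 ^ 2 := by
    nlinarith [sq_nonneg (y4 - y5), sq_nonneg y4, sq_nonneg y5, sq_nonneg (y4 + y5)]
  have had : 0 < a * d := lt_of_le_of_lt hDnn hD
  -- Step 4: conclude
  rcases lt_trichotomy a 0 with hlt | heq | hgt
  · -- a < 0 : negative definite
    have hnegM : -(ImPart z) = !![((-a:ℝ):ℂ), -bb; (starRingEnd ℂ) (-bb), ((-d:ℝ):ℂ)] := by
      rw [hIm]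
      ext i j
      fin_cases i <;> fin_cases j <;> push_cast <;> simp
    have hP : (-(ImPart z)).PosDef := by
      rw [hnegM]
      have hd2 : Complex.normSq (-bb) < (-a) * (-d) := by
        rw [Complex.normSq_neg]; nlinarith
      exact aux_posdef_two (-a) (-d) (-bb) (by linarith) hd2
    refine ⟨Or.inr hP, ?_, ?_⟩
    · intro h; linarith
    · intro hPD
      rw [hIm] at hPD
      exact absurd (aux_posdef_entry a d bb hPD) (by linarith)
  · exact absurd had (by rw [heq]; simp)
  · have hP : (ImPart z).PosDef := by
      rw [hIm]; exact aux_posdef_two a d bb hgt hdet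
    exact ⟨Or.inl hP, fun _ => hP, fun _ => hgt⟩
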